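/- There exists an absolute constant C > 0 such that for every odd prime power q, |K_q − 1| ≤ C/q, where K_q = (1 − q^{−1})^{−1/2} · ∏_Q (1 − q^{−2·deg Q})^{−1/2}, the product running over all monic irreducible polynomials Q ∈ F_q[T] with χ_q(Q(0)) = −1. In particular K_q → 1 as q → ∞ through odd prime powers. -/

import Mathlib

open Polynomial

lemma aux_card {F : Type} [Field F] [Fintype F] [DecidableEq F] (v : Finset F[X])
    (n : ℕ) (hv : ∀ P ∈ v, P.Monic ∧ P.natDegree = n) :
    v.card ≤ Fintype.card F ^ n := by
  classical
  have h := Finset.card_le_card_of_injOn (s := v) (t := (Finset.univ : Finset (Fin n → F)))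
    (fun (P : F[X]) (i : Fin n) => P.coeff i)
    (fun P _ => Finset.mem_univ _) ?_
  · simpa using h
  · intro P hP R hR h
    obtain ⟨hPm, hPd⟩ := hv P hP
    obtain ⟨hRm, hRd⟩ := hv R hR
    ext k
    rcases lt_trichotomy k n with hk | hk | hk
    · exact congrFun h ⟨k, hk⟩
    · subst hk
      rw [← hPd, hPm.coeff_natDegree, hPd, ← hRd, hRm.coeff_natDegree]
    · rw [Polynomial.coeff_eq_zero_of_natDegree_lt (by omega),
        Polynomial.coeff_eq_zero_of_natDegree_lt (by omega)]

lemma key_sum {F : Type} [Field F] [Fintype F] [DecidableEq F] (hq3 : 3 ≤ Fintype.card F)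
    {p : F[X] → Prop} (hp : ∀ P, p P → P.Monic ∧ 1 ≤ P.natDegree)
    (u : Finset {Q : F[X] // p Q}) :
    ∑ Q ∈ u, ((Fintype.card F : ℝ) ^ (2 * (Q : F[X]).natDegree))⁻¹
      ≤ 2 / (Fintype.card F : ℝ) := by
  classical
  set q := Fintype.card F with hq
  have hqR : (3:ℝ) ≤ (q:ℝ) := by exact_mod_cast hq3
  set N := u.sup (fun Q => Q.1.natDegree) with hN
  have hmaps : ∀ Q ∈ u, Q.1.natDegree ∈ Finset.Icc 1 N := by
    intro Q hQ
    rw [Finset.mem_Icc, hN]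
    exact ⟨(hp _ Q.2).2, Finset.le_sup (f := fun Q => Q.1.natDegree) hQ⟩
  have step1 : ∑ Q ∈ u, ((q : ℝ) ^ (2 * Q.1.natDegree))⁻¹
      = ∑ n ∈ Finset.Icc 1 N, ∑ Q ∈ u.filter (fun Q => Q.1.natDegree = n),
          ((q : ℝ) ^ (2 * Q.1.natDegree))⁻¹ :=
    (Finset.sum_fiberwise_of_maps_to hmaps _).symm
  have step2 : ∀ n ∈ Finset.Icc 1 N,
      ∑ Q ∈ u.filter (fun Q => Q.1.natDegree = n),
          ((q : ℝ) ^ (2 * Q.1.natDegree))⁻¹ ≤ ((q:ℝ))⁻¹ ^ n := by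
    intro n hn
    have hconst : ∑ Q ∈ u.filter (fun Q => Q.1.natDegree = n),
        ((q : ℝ) ^ (2 * Q.1.natDegree))⁻¹
        = (u.filter (fun Q => Q.1.natDegree = n)).card * ((q : ℝ) ^ (2 * n))⁻¹ := by
      rw [Finset.sum_congr rfl (fun Q hQ => by
        rw [(Finset.mem_filter.mp hQ).2]), Finset.sum_const, nsmul_eq_mul]
    rw [hconst]
    have hcard : (((u.filter (fun Q => Q.1.natDegree = n)).card : ℕ) : ℝ) ≤ (q:ℝ) ^ n := by
      have := aux_card ((u.filter (fun Q => Q.1.natDegree = n)).image Subtype.val) n ?_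
      · rw [Finset.card_image_of_injective _ Subtype.val_injective] at this
        exact_mod_cast this
      · intro P hP
        obtain ⟨Q, hQ, rfl⟩ := Finset.mem_image.mp hP
        exact ⟨(hp _ Q.2).1, (Finset.mem_filter.mp hQ).2⟩
    have hqn : (0:ℝ) < (q:ℝ) ^ n := by positivity
    have h2n : ((q:ℝ) ^ (2 * n)) = (q:ℝ)^n * (q:ℝ)^n := by rw [two_mul, pow_add]
    calc (((u.filter (fun Q => Q.1.natDegree = n)).card : ℕ) : ℝ) * ((q : ℝ) ^ (2 * n))⁻¹
        ≤ (q:ℝ)^n * ((q : ℝ) ^ (2 * n))⁻¹ := by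
          apply mul_le_mul_of_nonneg_right hcard; positivity
      _ = ((q:ℝ))⁻¹ ^ n := by
          rw [h2n, mul_inv, ← mul_assoc, mul_inv_cancel₀ (ne_of_gt hqn), one_mul, inv_pow]
  have step3 : ∑ n ∈ Finset.Icc 1 N, ((q:ℝ))⁻¹ ^ n ≤ 2 / (q:ℝ) := by
    have hr0 : (0:ℝ) < (q:ℝ)⁻¹ := by positivity
    have hr1 : (q:ℝ)⁻¹ ≤ 1/3 := by
      rw [inv_le_comm₀ (by linarith) (by norm_num)]; linarith
    have h2 : (0:ℝ) < 1 - (q:ℝ)⁻¹ := by linarith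
    have h3 : (1 - (q:ℝ)⁻¹)⁻¹ * (1 - (q:ℝ)⁻¹) = 1 := inv_mul_cancel₀ h2.ne'
    have hins : ∑ n ∈ Finset.range (N+1), ((q:ℝ))⁻¹ ^ n
        = 1 + ∑ n ∈ Finset.Icc 1 N, ((q:ℝ))⁻¹ ^ n := by
      have : Finset.range (N+1) = insert 0 (Finset.Icc 1 N) := by
        ext m; simp [Finset.mem_range, Finset.mem_Icc]; omega
      rw [this, Finset.sum_insert (by simp), pow_zero]
    have hgeom : ∑ n ∈ Finset.range (N+1), ((q:ℝ))⁻¹ ^ n ≤ (1 - (q:ℝ)⁻¹)⁻¹ := by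
      have h1 : (q:ℝ)⁻¹ ≠ 1 := by linarith
      rw [geom_sum_eq h1, div_le_iff_of_neg (by linarith : (q:ℝ)⁻¹ - 1 < 0)]
      nlinarith [pow_nonneg hr0.le (N+1)]
    have h4 : (1 - (q:ℝ)⁻¹)⁻¹ ≤ 3/2 := by
      rw [inv_le_comm₀ h2 (by norm_num)]; linarith
    have h6 : (1 - (q:ℝ)⁻¹)⁻¹ - 1 = (q:ℝ)⁻¹ * (1 - (q:ℝ)⁻¹)⁻¹ := by
      have hne : ((q:ℝ)) ≠ 0 := by linarith
      have hne1 : ((q:ℝ)) - 1 ≠ 0 := by linarith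
      field_simp
      ring
    have h7 : (q:ℝ)⁻¹ * (1 - (q:ℝ)⁻¹)⁻¹ ≤ (q:ℝ)⁻¹ * (3/2) :=
      mul_le_mul_of_nonneg_left h4 (by positivity)
    have h8 : (q:ℝ)⁻¹ * (3/2) ≤ 2 / (q:ℝ) := by
      rw [div_eq_mul_inv 2]
      linarith [hr0.le]
    linarith [hins ▸ hgeom]
  calc _ = _ := step1
    _ ≤ ∑ n ∈ Finset.Icc 1 N, ((q:ℝ))⁻¹ ^ n := Finset.sum_le_sum step2
    _ ≤ 2 / (q:ℝ) := step3

lemma sqrt_log_bound {x : ℝ} (h0 : 0 < x) (h2 : x ≤ 1/2) :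
    1 ≤ Real.sqrt ((1-x)⁻¹) ∧ 0 ≤ Real.log (Real.sqrt ((1-x)⁻¹)) ∧
      Real.log (Real.sqrt ((1-x)⁻¹)) ≤ x := by
  have hx : 0 < 1 - x := by linarith
  have hinv : (1-x)⁻¹ * (1-x) = 1 := inv_mul_cancel₀ hx.ne'
  have hyp : 0 < (1-x)⁻¹ := inv_pos.mpr hx
  have hy1 : 1 ≤ (1-x)⁻¹ := by nlinarith
  have hy2 : (1-x)⁻¹ ≤ 2 := by nlinarith
  have hsq1 : 1 ≤ Real.sqrt ((1-x)⁻¹) := by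
    have h := Real.sqrt_le_sqrt hy1
    rwa [Real.sqrt_one] at h
  have hls : Real.log (Real.sqrt ((1-x)⁻¹)) = Real.log ((1-x)⁻¹) / 2 :=
    Real.log_sqrt hyp.le
  have hlog0 : 0 ≤ Real.log ((1-x)⁻¹) := Real.log_nonneg hy1
  have hlogle : Real.log ((1-x)⁻¹) ≤ (1-x)⁻¹ - 1 := Real.log_le_sub_one_of_pos hyp
  have hsub : (1-x)⁻¹ - 1 ≤ 2 * x := by nlinarith
  refine ⟨hsq1, ?_, ?_⟩
  · rw [hls]; linarith
  · rw [hls]; linarith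

theorem Kq_tendsto_one :
    ∃ C : ℝ, 0 < C ∧
      ∀ (F : Type) [Field F] [Fintype F] [DecidableEq F], Odd (Fintype.card F) →
        |Real.sqrt ((1 - (Fintype.card F : ℝ)⁻¹)⁻¹) *
            (∏' Q : {Q : F[X] // Q.Monic ∧ Irreducible Q ∧
                quadraticChar F (Q.eval 0) = -1},
              Real.sqrt ((1 - ((Fintype.card F : ℝ) ^ (2 * (Q : F[X]).natDegree))⁻¹)⁻¹))
          - 1| ≤ C / (Fintype.card F : ℝ) := by
  refine ⟨9, by norm_num, ?_⟩
  intro F _ _ _ hodd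
  classical
  have hq3 : 3 ≤ Fintype.card F := by
    have h2 : 1 < Fintype.card F := Fintype.one_lt_card
    obtain ⟨k, hk⟩ := hodd; omega
  have hqR : (3:ℝ) ≤ (Fintype.card F : ℝ) := by exact_mod_cast hq3
  set q : ℝ := (Fintype.card F : ℝ) with hqdef
  have hq0 : (0:ℝ) < q := by linarith
  set S := {Q : F[X] // Q.Monic ∧ Irreducible Q ∧ quadraticChar F (Q.eval 0) = -1} with hS
  have hp : ∀ P : F[X], (P.Monic ∧ Irreducible P ∧ quadraticChar F (P.eval 0) = -1) →
      P.Monic ∧ 1 ≤ P.natDegree := fun P h => ⟨h.1, h.2.1.natDegree_pos⟩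
  -- per-factor bounds
  have hxQ : ∀ Q : S, 0 < (q ^ (2 * (Q : F[X]).natDegree))⁻¹ ∧
      (q ^ (2 * (Q : F[X]).natDegree))⁻¹ ≤ 1/2 := by
    intro Q
    have hn : 1 ≤ (Q : F[X]).natDegree := (hp _ Q.2).2
    have hpow : (3:ℝ) ≤ q ^ (2 * (Q : F[X]).natDegree) :=
      le_trans hqR (le_self_pow₀ (by linarith) (by omega))
    constructor
    · positivity
    · rw [inv_le_comm₀ (by linarith) (by norm_num)]; linarith
  have hfacts : ∀ Q : S,
      1 ≤ Real.sqrt ((1 - (q ^ (2 * (Q : F[X]).natDegree))⁻¹)⁻¹) ∧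
      0 ≤ Real.log (Real.sqrt ((1 - (q ^ (2 * (Q : F[X]).natDegree))⁻¹)⁻¹)) ∧
      Real.log (Real.sqrt ((1 - (q ^ (2 * (Q : F[X]).natDegree))⁻¹)⁻¹))
        ≤ (q ^ (2 * (Q : F[X]).natDegree))⁻¹ :=
    fun Q => sqrt_log_bound (hxQ Q).1 (hxQ Q).2
  have hsumle : ∀ u : Finset S,
      ∑ Q ∈ u, Real.log (Real.sqrt ((1 - (q ^ (2 * (Q : F[X]).natDegree))⁻¹)⁻¹)) ≤ 2 / q :=
    fun u => le_trans (Finset.sum_le_sum fun Q _ => (hfacts Q).2.2) (key_sum hq3 hp u)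
  have hsummable : Summable
      (fun Q : S => Real.log (Real.sqrt ((1 - (q ^ (2 * (Q : F[X]).natDegree))⁻¹)⁻¹))) :=
    summable_of_sum_le (fun Q => (hfacts Q).2.1) hsumle
  set T := ∑' Q : S, Real.log (Real.sqrt ((1 - (q ^ (2 * (Q : F[X]).natDegree))⁻¹)⁻¹)) with hT
  have hTle : T ≤ 2 / q := hsummable.tsum_le_of_sum_le hsumle
  have hT0 : 0 ≤ T := tsum_nonneg (fun Q => (hfacts Q).2.1)
  have hprod : (∏' Q : S, Real.sqrt ((1 - (q ^ (2 * (Q : F[X]).natDegree))⁻¹)⁻¹))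
      = Real.exp T := by
    have h := Real.rexp_tsum_eq_tprod
      (f := fun Q : S => Real.sqrt ((1 - (q ^ (2 * (Q : F[X]).natDegree))⁻¹)⁻¹))
      (fun Q => lt_of_lt_of_le one_pos (hfacts Q).1)
      hsummable
    exact h.symm
  rw [hprod]
  -- prefactor
  have hqinv : 0 < q⁻¹ ∧ q⁻¹ ≤ 1/2 := by
    constructor
    · positivity
    · rw [inv_le_comm₀ hq0 (by norm_num)]; linarith
  obtain ⟨hA1, hlogA0, hlogAle⟩ := sqrt_log_bound hqinv.1 hqinv.2
  set A := Real.sqrt ((1 - q⁻¹)⁻¹) with hA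
  have hApos : 0 < A := lt_of_lt_of_le one_pos hA1
  have hexpT1 : 1 ≤ Real.exp T := by
    rw [← Real.exp_zero]; exact Real.exp_le_exp.mpr hT0
  have hK1 : 1 ≤ A * Real.exp T := by nlinarith
  have hKexp : A * Real.exp T = Real.exp (Real.log A + T) := by
    rw [Real.exp_add, Real.exp_log hApos]
  have hinvle : q⁻¹ ≤ 1 / q := by rw [one_div]
  have hs : Real.log A + T ≤ 3 / q := by
    have : (1:ℝ)/q + 2/q = 3/q := by ring
    linarith
  have hs1 : 3 / q ≤ 1 := by rw [div_le_one hq0]; linarith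
  have hKle : A * Real.exp T ≤ Real.exp (3 / q) := by
    rw [hKexp]; exact Real.exp_le_exp.mpr hs
  have hexp3 : Real.exp (3/q) ≤ 3 := by
    calc Real.exp (3/q) ≤ Real.exp 1 := Real.exp_le_exp.mpr hs1
      _ ≤ 3 := le_of_lt (lt_trans Real.exp_one_lt_d9 (by norm_num))
  have hsub : Real.exp (3/q) - 1 ≤ (3/q) * Real.exp (3/q) := by
    have h := Real.add_one_le_exp (-(3/q))
    have hmul := mul_le_mul_of_nonneg_right h (Real.exp_pos (3/q)).le
    rw [← Real.exp_add, neg_add_cancel, Real.exp_zero] at hmul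
    nlinarith [hmul]
  have h30 : (0:ℝ) ≤ 3/q := by positivity
  have hfin : (3/q) * Real.exp (3/q) ≤ 9 / q := by
    have := mul_le_mul_of_nonneg_left hexp3 h30
    have h9 : (3/q) * 3 = 9/q := by ring
    linarith
  rw [abs_of_nonneg (by linarith)]
  linarith
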